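/- Let Ω ⊆ ℝ² be simply connected and ψ a C² solution of the maximal surface equation with |∇ψ| < 1 on Ω. If φ : Ω → ℝ satisfies φ_x = ψ_y/√(1−|∇ψ|²) and φ_y = −ψ_x/√(1−|∇ψ|²), then φ solves the minimal surface equation. Together with the forward direction, this gives a one-to-one correspondence (up to additive constants) between solutions of the minimal and maximal surface equations on Ω. -/

import Mathlib

noncomputable def px (f : ℝ × ℝ → ℝ) (z : ℝ × ℝ) : ℝ := fderiv ℝ f z (1, 0)

noncomputable def py (f : ℝ × ℝ → ℝ) (z : ℝ × ℝ) : ℝ := fderiv ℝ f z (0, 1)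

/-- `W φ z = √(1 + |∇φ(z)|²)`. -/
noncomputable def W (φ : ℝ × ℝ → ℝ) (z : ℝ × ℝ) : ℝ :=
  Real.sqrt (1 + (px φ z) ^ 2 + (py φ z) ^ 2)

/-- `Wm ψ z = √(1 − |∇ψ(z)|²)`. -/
noncomputable def Wm (ψ : ℝ × ℝ → ℝ) (z : ℝ × ℝ) : ℝ :=
  Real.sqrt (1 - (px ψ z) ^ 2 - (py ψ z) ^ 2)

/-- The minimal surface equation `div(∇φ/√(1+|∇φ|²)) = 0` on `Ω`. -/
def MinimalSurfaceEq (φ : ℝ × ℝ → ℝ) (Ω : Set (ℝ × ℝ)) : Prop :=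
  ∀ z ∈ Ω, px (fun z => px φ z / W φ z) z + py (fun z => py φ z / W φ z) z = 0

/-- The maximal surface equation `div(∇ψ/√(1−|∇ψ|²)) = 0` on `Ω`. -/
def MaximalSurfaceEq (ψ : ℝ × ℝ → ℝ) (Ω : Set (ℝ × ℝ)) : Prop :=
  ∀ z ∈ Ω, px (fun z => px ψ z / Wm ψ z) z + py (fun z => py ψ z / Wm ψ z) z = 0

lemma key_ratio (ψ : ℝ × ℝ → ℝ) (φ : ℝ × ℝ → ℝ) (w : ℝ × ℝ)
    (hsp : (px ψ w) ^ 2 + (py ψ w) ^ 2 < 1)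
    (h1 : px φ w = py ψ w / Wm ψ w) (h2 : py φ w = -(px ψ w) / Wm ψ w) :
    px φ w / W φ w = py ψ w ∧ py φ w / W φ w = -(px ψ w) := by
  set a := px ψ w with ha
  set b := py ψ w with hb
  have hpos : 0 < 1 - a ^ 2 - b ^ 2 := by nlinarith
  have hs : 0 < Wm ψ w := Real.sqrt_pos.mpr hpos
  have hs2 : (Wm ψ w) ^ 2 = 1 - a ^ 2 - b ^ 2 := Real.sq_sqrt hpos.le
  set s := Wm ψ w with hsdef
  have hW : W φ w = 1 / s := by
    unfold W
    rw [h1, h2]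
    rw [show 1 + (b / s) ^ 2 + (-a / s) ^ 2 = (1 / s) ^ 2 by
      field_simp; nlinarith]
    exact Real.sqrt_sq (by positivity)
  constructor
  · rw [h1, hW]; field_simp
  · rw [h2, hW]; field_simp

/-- if `ψ` is a C² spacelike (`|∇ψ|<1`) solution of the maximal surface
equation on a simply connected `Ω` and `φ` satisfies `φ_x = ψ_y/√(1−|∇ψ|²)`,
`φ_y = −ψ_x/√(1−|∇ψ|²)`, then `φ` solves the minimal surface equation; moreover any
two such `φ` differ by an additive constant on `Ω` (the correspondence is one-to-one
up to additive constants). -/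
theorem stmt_2 (Ω : Set (ℝ × ℝ)) (hΩ : IsOpen Ω) (hsc : SimplyConnectedSpace Ω)
    (ψ : ℝ × ℝ → ℝ) (hψ : ContDiffOn ℝ 2 ψ Ω)
    (hsp : ∀ z ∈ Ω, (px ψ z) ^ 2 + (py ψ z) ^ 2 < 1)
    (hmax : MaximalSurfaceEq ψ Ω)
    (φ : ℝ × ℝ → ℝ) (hφd : DifferentiableOn ℝ φ Ω)
    (hdual : ∀ z ∈ Ω, px φ z = py ψ z / Wm ψ z ∧ py φ z = -(px ψ z) / Wm ψ z) :
    MinimalSurfaceEq φ Ω ∧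
    ∀ φ₁ φ₂ : ℝ × ℝ → ℝ, DifferentiableOn ℝ φ₁ Ω → DifferentiableOn ℝ φ₂ Ω →
      (∀ z ∈ Ω, px φ₁ z = py ψ z / Wm ψ z ∧ py φ₁ z = -(px ψ z) / Wm ψ z) →
      (∀ z ∈ Ω, px φ₂ z = py ψ z / Wm ψ z ∧ py φ₂ z = -(px ψ z) / Wm ψ z) →
      ∃ c : ℝ, ∀ z ∈ Ω, φ₁ z = φ₂ z + c := by
  constructor
  · -- minimal surface equation
    intro z hz
    have hψ2 : ContDiffAt ℝ 2 ψ z := hψ.contDiffAt (hΩ.mem_nhds hz)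
    have hdd : DifferentiableAt ℝ (fderiv ℝ ψ) z :=
      (hψ2.fderiv_right (m := 1) (by norm_num)).differentiableAt one_ne_zero
    have happ : ∀ v u : ℝ × ℝ,
        fderiv ℝ (fun w => fderiv ℝ ψ w v) z u = fderiv ℝ (fderiv ℝ ψ) z u v := by
      intro v u
      rw [(hdd.hasFDerivAt.clm_apply (hasFDerivAt_const v z)).fderiv]
      simp
    have hsymm : IsSymmSndFDerivAt ℝ ψ z := hψ2.isSymmSndFDerivAt (by simp)
    have e1 : px (fun w => px φ w / W φ w) z
        = fderiv ℝ (fun w => fderiv ℝ ψ w (0, 1)) z (1, 0) := by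
      unfold px
      congr 1
      apply Filter.EventuallyEq.fderiv_eq
      filter_upwards [hΩ.mem_nhds hz] with w hw
      exact (key_ratio ψ φ w (hsp w hw) (hdual w hw).1 (hdual w hw).2).1
    have e2 : py (fun w => py φ w / W φ w) z
        = fderiv ℝ (fun w => -(fderiv ℝ ψ w (1, 0))) z (0, 1) := by
      unfold py
      congr 1
      apply Filter.EventuallyEq.fderiv_eq
      filter_upwards [hΩ.mem_nhds hz] with w hw
      exact (key_ratio ψ φ w (hsp w hw) (hdual w hw).1 (hdual w hw).2).2
    have e2' : fderiv ℝ (fun w => -(fderiv ℝ ψ w (1, 0))) z (0, 1)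
        = -(fderiv ℝ (fun w => fderiv ℝ ψ w (1, 0)) z (0, 1)) := by
      rw [fderiv_fun_neg]; simp
    rw [e1, e2, e2', happ, happ, hsymm (1, 0) (0, 1)]
    ring
  · -- uniqueness up to additive constant
    intro φ₁ φ₂ h1d h2d hdl1 hdl2
    haveI : PathConnectedSpace Ω := inferInstance
    haveI : PreconnectedSpace Ω := inferInstance
    obtain ⟨⟨z₀, hz₀⟩⟩ : Nonempty Ω := inferInstance
    set g : ℝ × ℝ → ℝ := fun w => φ₁ w - φ₂ w with hg
    have hg0 : ∀ z ∈ Ω, HasFDerivAt g (0 : (ℝ × ℝ) →L[ℝ] ℝ) z := by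
      intro z hz
      have d1 : DifferentiableAt ℝ φ₁ z := h1d.differentiableAt (hΩ.mem_nhds hz)
      have d2 : DifferentiableAt ℝ φ₂ z := h2d.differentiableAt (hΩ.mem_nhds hz)
      have heq : fderiv ℝ φ₁ z = fderiv ℝ φ₂ z := by
        apply ContinuousLinearMap.ext
        intro v
        have hv : v = v.1 • ((1 : ℝ), (0 : ℝ)) + v.2 • ((0 : ℝ), (1 : ℝ)) := by
          ext <;> simp
        have hx : fderiv ℝ φ₁ z (1, 0) = fderiv ℝ φ₂ z (1, 0) :=
          (hdl1 z hz).1.trans (hdl2 z hz).1.symm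
        have hy : fderiv ℝ φ₁ z (0, 1) = fderiv ℝ φ₂ z (0, 1) :=
          (hdl1 z hz).2.trans (hdl2 z hz).2.symm
        rw [hv]
        simp only [map_add, map_smul, hx, hy]
      have h := d1.hasFDerivAt.sub d2.hasFDerivAt
      rw [heq] at h
      rw [sub_self] at h
      exact h
    have hlc : IsLocallyConstant (fun x : Ω => g x.1) := by
      rw [IsLocallyConstant.iff_exists_open]
      rintro ⟨x, hx⟩
      obtain ⟨r, hr, hball⟩ := Metric.isOpen_iff.mp hΩ x hx
      refine ⟨Subtype.val ⁻¹' Metric.ball x r,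
        Metric.isOpen_ball.preimage continuous_subtype_val, by simpa using hr, ?_⟩
      rintro ⟨y, hy⟩ hyb
      have hdiff : DifferentiableOn ℝ g (Metric.ball x r) := fun w hw =>
        ((hg0 w (hball hw)).differentiableAt).differentiableWithinAt
      have hzero : ∀ w ∈ Metric.ball x r, fderivWithin ℝ g (Metric.ball x r) w = 0 := by
        intro w hw
        rw [fderivWithin_of_isOpen Metric.isOpen_ball hw]
        exact (hg0 w (hball hw)).fderiv
      exact (convex_ball x r).is_const_of_fderivWithin_eq_zero hdiff hzero hyb
        (Metric.mem_ball_self hr)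
    refine ⟨g z₀, fun z hz => ?_⟩
    have := hlc.apply_eq_of_preconnectedSpace ⟨z, hz⟩ ⟨z₀, hz₀⟩
    have h1 : φ₁ z - φ₂ z = φ₁ z₀ - φ₂ z₀ := this
    have h2 : g z₀ = φ₁ z₀ - φ₂ z₀ := rfl
    linarith
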